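/- Let (s,t) ∈ ℚ²∖ℤ² and let r ∈ ℤ∖{0} with (rs,rt) ∉ ℤ². Write z(τ) := sτ+t and ω_{c,d}(τ) := cτ+d. Then for all τ ∈ ℍ with z(τ), rz(τ) ∉ ℤτ+ℤ: h_{r,(s,t)}(τ) = (r²−1)/(r·z(τ)) + ∑_{(c,d) ∈ ℤ²∖{(0,0)}} ( r(r−1)·z(τ)² / ((1 − z(τ)/ω_{c,d}(τ))·(1 − r·z(τ)/ω_{c,d}(τ))) )·(1/ω_{c,d}(τ)³), where the sum converges absolutely. -/

import Mathlib

/-- The lattice `ℤτ + ℤ`. -/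
def lat (τ : ℂ) : Set ℂ := {w : ℂ | ∃ m n : ℤ, w = (m : ℂ) * τ + (n : ℂ)}

/-- The Weierstrass ζ-function attached to a set `Ω ⊂ ℂ`. -/
noncomputable def wzeta (Ω : Set ℂ) (z : ℂ) : ℂ :=
  1 / z + ∑' ω : {w : ℂ // w ∈ Ω ∧ w ≠ 0},
    (1 / (z - (ω : ℂ)) + 1 / (ω : ℂ) + z / (ω : ℂ) ^ 2)

/-- `g_{(s,t)}(τ) = ζ(τ, sτ + t)`, where `ζ(τ,z) = ζ(τℤ+ℤ, z)`. -/
noncomputable def g (s t : ℚ) (τ : ℂ) : ℂ := wzeta (lat τ) ((s : ℂ) * τ + (t : ℂ))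

/-- `h_{r,(s,t)} = r·g_{(s,t)} − g_{(rs,rt)}`. -/
noncomputable def h (r : ℤ) (s t : ℚ) (τ : ℂ) : ℂ :=
  (r : ℂ) * g s t τ - g ((r : ℚ) * s) ((r : ℚ) * t) τ

namespace HExp



def omega (τ : ℂ) (p : ℤ × ℤ) : ℂ := (p.1 : ℂ) * τ + (p.2 : ℂ)

lemma lat_zero (τ : ℂ) : (0 : ℂ) ∈ lat τ := ⟨0, 0, by simp⟩

lemma mem_lat (τ : ℂ) (p : ℤ × ℤ) : omega τ p ∈ lat τ := ⟨p.1, p.2, rfl⟩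

lemma indep {τ : ℂ} (hτ : 0 < τ.im) {m n : ℤ} (h : (m : ℂ) * τ + (n : ℂ) = 0) :
    m = 0 ∧ n = 0 := by
  have him : (m : ℝ) * τ.im = 0 := by
    have := congrArg Complex.im h
    simpa using this
  have hm : m = 0 := by
    rcases mul_eq_zero.mp him with h' | h'
    · exact_mod_cast h'
    · exact absurd h' hτ.ne'
  subst hm
  simp only [Int.cast_zero, zero_mul, zero_add] at h
  exact ⟨rfl, by exact_mod_cast h⟩

lemma omega_ne_zero {τ : ℂ} (hτ : 0 < τ.im) {p : ℤ × ℤ} (hp : p ≠ (0, 0)) :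
    omega τ p ≠ 0 := by
  intro h
  obtain ⟨h1, h2⟩ := indep hτ h
  exact hp (Prod.ext h1 h2)

lemma omega_sub_ne_zero {τ : ℂ} {w : ℂ} (hw : w ∉ lat τ) (p : ℤ × ℤ) :
    omega τ p - w ≠ 0 := by
  intro h
  exact hw (by rw [show w = omega τ p from (sub_eq_zero.mp h).symm]; exact mem_lat τ p)

lemma omega_injective {τ : ℂ} (hτ : 0 < τ.im) : Function.Injective (omega τ) := by
  intro p q h
  have : ((p.1 - q.1 : ℤ) : ℂ) * τ + ((p.2 - q.2 : ℤ) : ℂ) = 0 := by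
    push_cast
    unfold omega at h
    linear_combination h
  obtain ⟨h1, h2⟩ := indep hτ this
  have h1' : p.1 = q.1 := by omega
  have h2' : p.2 = q.2 := by omega
  exact Prod.ext h1' h2'

noncomputable def latEquiv {τ : ℂ} (hτ : 0 < τ.im) :
    {p : ℤ × ℤ // p ≠ (0, 0)} ≃ {w : ℂ // w ∈ lat τ ∧ w ≠ 0} :=
  Equiv.ofBijective
    (fun p => ⟨omega τ p.1, mem_lat τ p.1, omega_ne_zero hτ p.2⟩)
    ⟨fun p q h => Subtype.ext (omega_injective hτ (by simpa using congrArg Subtype.val h)),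
     by
      rintro ⟨w, ⟨m, n, rfl⟩, hw0⟩
      refine ⟨⟨(m, n), ?_⟩, rfl⟩
      intro h
      rw [Prod.ext_iff] at h
      obtain ⟨h1, h2⟩ := h
      subst h1; subst h2
      exact hw0 (by simp)⟩




lemma base_summable :
    Summable fun p : ℤ × ℤ => ‖(![p.1, p.2] : Fin 2 → ℤ)‖ ^ (-3 : ℝ) := by
  have h := EisensteinSeries.summable_one_div_norm_rpow (by norm_num : (2 : ℝ) < 3)
  have := ((finTwoArrowEquiv ℤ).symm.summable_iff (f := fun x : Fin 2 → ℤ => ‖x‖ ^ (-3 : ℝ))).2 h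
  refine this.congr fun p => ?_
  simp [finTwoArrowEquiv]

lemma finite_small (M : ℝ) :
    {p : ℤ × ℤ | ‖(![p.1, p.2] : Fin 2 → ℤ)‖ < M}.Finite := by
  obtain ⟨N, hN⟩ := exists_nat_ge M
  apply (Set.finite_Icc (-(N : ℤ), -(N : ℤ)) ((N : ℤ), (N : ℤ))).subset
  intro p hp
  rw [Set.mem_setOf_eq, EisensteinSeries.norm_eq_max_natAbs] at hp
  simp only [Matrix.cons_val_zero, Matrix.cons_val_one, Matrix.head_cons] at hp
  have hmax : max p.1.natAbs p.2.natAbs ≤ N := by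
    exact_mod_cast (hp.trans_le hN).le
  have h1 : p.1.natAbs ≤ N := le_trans (le_max_left _ _) hmax
  have h2 : p.2.natAbs ≤ N := le_trans (le_max_right _ _) hmax
  rw [Set.mem_Icc, Prod.le_def, Prod.le_def]
  refine ⟨⟨?_, ?_⟩, ?_, ?_⟩ <;> simp <;> omega

lemma ev_lower (M : ℝ) :
    ∀ᶠ p : {p : ℤ × ℤ // p ≠ (0, 0)} in Filter.cofinite,
      M ≤ ‖(![p.1.1, p.1.2] : Fin 2 → ℤ)‖ := by
  rw [Filter.eventually_cofinite]
  apply Set.Finite.subset ((finite_small M).preimage Subtype.val_injective.injOn)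
  intro p hp
  simp only [Set.mem_setOf_eq, not_le] at hp ⊢
  exact hp

lemma summable_of_norm_eq {τ : ℂ} (hτ : 0 < τ.im) (w₁ w₂ : ℂ) (K : ℝ) (hK : 0 ≤ K)
    (F : {p : ℤ × ℤ // p ≠ (0, 0)} → ℂ)
    (hF : ∀ p : {p : ℤ × ℤ // p ≠ (0, 0)},
      ‖F p‖ = K / (‖omega τ p.1 - w₁‖ * ‖omega τ p.1 - w₂‖ * ‖omega τ p.1‖)) :
    Summable fun p : {p : ℤ × ℤ // p ≠ (0, 0)} => ‖F p‖ := by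
  set R := EisensteinSeries.r ⟨τ, hτ⟩ with hR_def
  have hR : 0 < R := EisensteinSeries.r_pos _
  set W := max ‖w₁‖ ‖w₂‖ with hW_def
  have hW0 : (0 : ℝ) ≤ W := le_trans (norm_nonneg w₁) (le_max_left _ _)
  set M := 2 * W / R + 1 with hM_def
  refine Summable.of_norm_bounded_eventually
    (g := fun p : {p : ℤ × ℤ // p ≠ (0, 0)} => (4 * K / R ^ 3) * ‖(![p.1.1, p.1.2] : Fin 2 → ℤ)‖ ^ (-3 : ℝ)) ?_ ?_
  · exact (base_summable.subtype _).mul_left _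
  · filter_upwards [ev_lower M] with p hp
    rw [norm_norm, hF p]
    set X := ‖(![p.1.1, p.1.2] : Fin 2 → ℤ)‖ with hX_def
    have hXM : M ≤ X := hp
    have hM1 : (1 : ℝ) ≤ M := by
      have : (0 : ℝ) ≤ 2 * W / R := by positivity
      rw [hM_def]; linarith
    have hX1 : (1 : ℝ) ≤ X := le_trans hM1 hXM
    have hX0 : (0 : ℝ) < X := lt_of_lt_of_le one_pos hX1
    have hx0 : (![p.1.1, p.1.2] : Fin 2 → ℤ) ≠ 0 := by
      intro h
      have h1 := congrFun h 0
      have h2 := congrFun h 1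
      simp at h1 h2
      exact p.2 (Prod.ext h1 h2)
    have hω : R * X ≤ ‖omega τ p.1‖ := by
      have := EisensteinSeries.r_mul_max_le (⟨τ, hτ⟩ : UpperHalfPlane) hx0
      simpa [omega, UpperHalfPlane.coe] using this
    have hWX : W ≤ R * X / 2 := by
      have h2 : 2 * W / R ≤ X - 1 := by rw [hM_def] at hXM; linarith
      rw [div_le_iff₀ hR] at h2
      nlinarith
    have h1 : R / 2 * X ≤ ‖omega τ p.1 - w₁‖ := by
      have hns := norm_sub_norm_le (omega τ p.1) w₁
      have hw : ‖w₁‖ ≤ R * X / 2 := (le_max_left _ _).trans hWX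
      linarith
    have h2 : R / 2 * X ≤ ‖omega τ p.1 - w₂‖ := by
      have hns := norm_sub_norm_le (omega τ p.1) w₂
      have hw : ‖w₂‖ ≤ R * X / 2 := (le_max_right _ _).trans hWX
      linarith
    have hstep : K / (‖omega τ p.1 - w₁‖ * ‖omega τ p.1 - w₂‖ * ‖omega τ p.1‖)
        ≤ K / ((R / 2 * X) * (R / 2 * X) * (R * X)) := by
      apply div_le_div_of_nonneg_left hK (by positivity)
      gcongr <;> positivity
    refine hstep.trans (le_of_eq ?_)
    rw [show (-3 : ℝ) = -((3 : ℕ) : ℝ) by norm_num, Real.rpow_neg hX0.le, Real.rpow_natCast]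
    field_simp
    ring


theorem main_aux (τ : ℂ) (hτ : 0 < τ.im) (z : ℂ) (r : ℤ) (hr : r ≠ 0)
    (hz : z ∉ lat τ) (hrz : (r : ℂ) * z ∉ lat τ) :
    Summable (fun p : {p : ℤ × ℤ // p ≠ (0, 0)} =>
      ‖(r : ℂ) * ((r : ℂ) - 1) * z ^ 2 /
          ((1 - z / omega τ p.1) * (1 - (r : ℂ) * z / omega τ p.1)) *
          (1 / (omega τ p.1) ^ 3)‖) ∧
    (r : ℂ) * wzeta (lat τ) z - wzeta (lat τ) ((r : ℂ) * z) =
      ((r : ℂ) ^ 2 - 1) / ((r : ℂ) * z) +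
        ∑' p : {p : ℤ × ℤ // p ≠ (0, 0)},
          (r : ℂ) * ((r : ℂ) - 1) * z ^ 2 /
              ((1 - z / omega τ p.1) * (1 - (r : ℂ) * z / omega τ p.1)) *
            (1 / (omega τ p.1) ^ 3) := by
  have hz0 : z ≠ 0 := fun h => hz (h ▸ lat_zero τ)
  have hrC : (r : ℂ) ≠ 0 := Int.cast_ne_zero.mpr hr
  have hrz0 : (r : ℂ) * z ≠ 0 := mul_ne_zero hrC hz0
  have hω0 : ∀ p : {p : ℤ × ℤ // p ≠ (0, 0)}, omega τ p.1 ≠ 0 :=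
    fun p => omega_ne_zero hτ p.2
  have hωz : ∀ p : {p : ℤ × ℤ // p ≠ (0, 0)}, omega τ p.1 - z ≠ 0 :=
    fun p => omega_sub_ne_zero hz p.1
  have hωrz : ∀ p : {p : ℤ × ℤ // p ≠ (0, 0)}, omega τ p.1 - (r : ℂ) * z ≠ 0 :=
    fun p => omega_sub_ne_zero hrz p.1
  set a : {p : ℤ × ℤ // p ≠ (0, 0)} → ℂ :=
    fun p => 1 / (z - omega τ p.1) + 1 / omega τ p.1 + z / (omega τ p.1) ^ 2 with ha_def
  set b : {p : ℤ × ℤ // p ≠ (0, 0)} → ℂ :=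
    fun p => 1 / ((r : ℂ) * z - omega τ p.1) + 1 / omega τ p.1 +
      (r : ℂ) * z / (omega τ p.1) ^ 2 with hb_def
  set F : {p : ℤ × ℤ // p ≠ (0, 0)} → ℂ :=
    fun p => (r : ℂ) * ((r : ℂ) - 1) * z ^ 2 /
      ((1 - z / omega τ p.1) * (1 - (r : ℂ) * z / omega τ p.1)) *
      (1 / (omega τ p.1) ^ 3) with hF_def
  have hzω : ∀ p : {p : ℤ × ℤ // p ≠ (0, 0)}, z - omega τ p.1 ≠ 0 :=
    fun p => sub_ne_zero.mpr (sub_ne_zero.mp (hωz p)).symm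
  have hrzω : ∀ p : {p : ℤ × ℤ // p ≠ (0, 0)}, (r : ℂ) * z - omega τ p.1 ≠ 0 :=
    fun p => sub_ne_zero.mpr (sub_ne_zero.mp (hωrz p)).symm
  have hFrepr : ∀ p, F p =
      (r : ℂ) * ((r : ℂ) - 1) * z ^ 2 /
        ((omega τ p.1 - z) * (omega τ p.1 - (r : ℂ) * z) * omega τ p.1) := by
    intro p
    simp only [hF_def]
    have e1 : (1 - z / omega τ p.1) = (omega τ p.1 - z) / omega τ p.1 := by
      field_simp [hω0 p]
    have e2 : (1 - (r : ℂ) * z / omega τ p.1) =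
        (omega τ p.1 - (r : ℂ) * z) / omega τ p.1 := by
      field_simp [hω0 p]
    rw [e1, e2]
    field_simp [hω0 p, hωz p, hωrz p]
  have harepr : ∀ p, a p = -(z ^ 2 / ((omega τ p.1 - z) * (omega τ p.1 - 0) * omega τ p.1)) := by
    intro p
    simp only [ha_def]
    field_simp [hω0 p, hωz p, hzω p]
    ring
  have hbrepr : ∀ p, b p = -(((r : ℂ) * z) ^ 2 /
      ((omega τ p.1 - (r : ℂ) * z) * (omega τ p.1 - 0) * omega τ p.1)) := by
    intro p
    simp only [hb_def]
    field_simp [hω0 p, hωrz p, hrzω p]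
    ring
  have hSa : Summable fun p => ‖a p‖ := by
    apply summable_of_norm_eq hτ z 0 (‖z ^ 2‖) (norm_nonneg _)
    intro p
    rw [harepr p, norm_neg, norm_div]
    congr 1
    rw [norm_mul, norm_mul]
  have hSb : Summable fun p => ‖b p‖ := by
    apply summable_of_norm_eq hτ ((r : ℂ) * z) 0 (‖((r : ℂ) * z) ^ 2‖) (norm_nonneg _)
    intro p
    rw [hbrepr p, norm_neg, norm_div]
    congr 1
    rw [norm_mul, norm_mul]
  have hSF : Summable fun p => ‖F p‖ := by
    apply summable_of_norm_eq hτ z ((r : ℂ) * z)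
      (‖(r : ℂ) * ((r : ℂ) - 1) * z ^ 2‖) (norm_nonneg _)
    intro p
    rw [hFrepr p, norm_div]
    congr 1
    rw [norm_mul, norm_mul]
  have Sa : Summable a := hSa.of_norm
  have Sb : Summable b := hSb.of_norm
  refine ⟨hSF, ?_⟩
  have hpoint : ∀ p, F p = (r : ℂ) * a p - b p := by
    intro p
    rw [hFrepr p]; simp only [ha_def, hb_def]
    field_simp [hω0 p, hωz p, hωrz p, hzω p, hrzω p]
    ring
  have key : (∑' p, F p) = (r : ℂ) * (∑' p, a p) - ∑' p, b p := by
    rw [← tsum_mul_left, ← Summable.tsum_sub (Sa.mul_left _) Sb]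
    exact tsum_congr fun p => hpoint p
  have hTa : (∑' w : {w : ℂ // w ∈ lat τ ∧ w ≠ 0},
      (1 / (z - (w : ℂ)) + 1 / (w : ℂ) + z / (w : ℂ) ^ 2)) = ∑' p, a p := by
    rw [← (latEquiv hτ).tsum_eq
      (f := fun w : {w : ℂ // w ∈ lat τ ∧ w ≠ 0} =>
        (1 / (z - (w : ℂ)) + 1 / (w : ℂ) + z / (w : ℂ) ^ 2))]
    rfl
  have hTb : (∑' w : {w : ℂ // w ∈ lat τ ∧ w ≠ 0},
      (1 / ((r : ℂ) * z - (w : ℂ)) + 1 / (w : ℂ) + (r : ℂ) * z / (w : ℂ) ^ 2)) = ∑' p, b p := by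
    rw [← (latEquiv hτ).tsum_eq
      (f := fun w : {w : ℂ // w ∈ lat τ ∧ w ≠ 0} =>
        (1 / ((r : ℂ) * z - (w : ℂ)) + 1 / (w : ℂ) + (r : ℂ) * z / (w : ℂ) ^ 2))]
    rfl
  rw [wzeta, wzeta, hTa, hTb, key]
  have hc : (r : ℂ) * (1 / z) - 1 / ((r : ℂ) * z) = ((r : ℂ) ^ 2 - 1) / ((r : ℂ) * z) := by
    field_simp
  linear_combination hc

end HExp

/-- for `(s,t) ∈ ℚ²∖ℤ²` and `r ∈ ℤ∖{0}` with `(rs,rt) ∉ ℤ²`, writing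
`z = sτ+t` and `ω = cτ+d`, for all `τ ∈ ℍ` with `z, rz ∉ ℤτ+ℤ` one has
`h_{r,(s,t)}(τ) = (r²−1)/(rz) + ∑_{(c,d) ≠ (0,0)} (r(r−1)z² / ((1 − z/ω)(1 − rz/ω)))·(1/ω³)`,
the sum converging absolutely. -/
theorem h_expansion (s t : ℚ) (hst : ¬ ∃ m n : ℤ, s = (m : ℚ) ∧ t = (n : ℚ))
    (r : ℤ) (hr : r ≠ 0)
    (hrst : ¬ ∃ m n : ℤ, (r : ℚ) * s = (m : ℚ) ∧ (r : ℚ) * t = (n : ℚ))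
    (τ : ℂ) (hτ : 0 < τ.im)
    (hz : ((s : ℂ) * τ + (t : ℂ)) ∉ lat τ)
    (hrz : (r : ℂ) * ((s : ℂ) * τ + (t : ℂ)) ∉ lat τ) :
    Summable (fun p : {p : ℤ × ℤ // p ≠ (0, 0)} =>
      ‖(r : ℂ) * ((r : ℂ) - 1) * ((s : ℂ) * τ + (t : ℂ)) ^ 2 /
          ((1 - ((s : ℂ) * τ + (t : ℂ)) / (((p : ℤ × ℤ).1 : ℂ) * τ + ((p : ℤ × ℤ).2 : ℂ))) *
            (1 - (r : ℂ) * ((s : ℂ) * τ + (t : ℂ)) /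
              (((p : ℤ × ℤ).1 : ℂ) * τ + ((p : ℤ × ℤ).2 : ℂ)))) *
          (1 / (((p : ℤ × ℤ).1 : ℂ) * τ + ((p : ℤ × ℤ).2 : ℂ)) ^ 3)‖) ∧
    h r s t τ =
      ((r : ℂ) ^ 2 - 1) / ((r : ℂ) * ((s : ℂ) * τ + (t : ℂ))) +
        ∑' p : {p : ℤ × ℤ // p ≠ (0, 0)},
          (r : ℂ) * ((r : ℂ) - 1) * ((s : ℂ) * τ + (t : ℂ)) ^ 2 /
              ((1 - ((s : ℂ) * τ + (t : ℂ)) /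
                  (((p : ℤ × ℤ).1 : ℂ) * τ + ((p : ℤ × ℤ).2 : ℂ))) *
                (1 - (r : ℂ) * ((s : ℂ) * τ + (t : ℂ)) /
                  (((p : ℤ × ℤ).1 : ℂ) * τ + ((p : ℤ × ℤ).2 : ℂ)))) *
            (1 / (((p : ℤ × ℤ).1 : ℂ) * τ + ((p : ℤ × ℤ).2 : ℂ)) ^ 3) := by
  have key := HExp.main_aux τ hτ ((s : ℂ) * τ + (t : ℂ)) r hr hz hrz
  have harg : ((((r : ℚ) * s : ℚ)) : ℂ) * τ + (((r : ℚ) * t : ℚ) : ℂ) =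
      (r : ℂ) * ((s : ℂ) * τ + (t : ℂ)) := by
    push_cast
    ring
  refine ⟨key.1, ?_⟩
  unfold h g
  rw [harg]
  exact key.2
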